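/- arXiv:2007.01701 — 2 statements merged into one kernel-verified Lean document; each statement's English description precedes it below -/
import Mathlib

section
/- Let A be a positive bounded operator on H, and let T, S, R be bounded operators where T and S are A-positive. The 2×2 block operator [[T, R^{♯_A}], [R, S]] on H ⊕ H is 𝐀-positive (where 𝐀 = diag(A,A)) if and only if |⟨Rx,y⟩_A|² ≤ ⟨Tx,x⟩_A · ⟨Sy,y⟩_A for all x, y ∈ H. -/
open scoped ComplexOrder

noncomputable def normA {H : Type*} [NormedAddCommGroup H] [InnerProductSpace ℂ H]
    (A : H →L[ℂ] H) (x : H) : ℝ := Real.sqrt ((inner ℂ (A x) x : ℂ)).re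

noncomputable def wA {H : Type*} [NormedAddCommGroup H] [InnerProductSpace ℂ H]
    (A T : H →L[ℂ] H) : ℝ :=
  sSup ((fun x => ‖(inner ℂ (A (T x)) x : ℂ)‖) '' {x : H | normA A x = 1})

noncomputable def opA {H : Type*} [NormedAddCommGroup H] [InnerProductSpace ℂ H]
    (A S : H →L[ℂ] H) : ℝ :=
  sSup ((fun x => normA A (S x)) '' {x : H | normA A x = 1})

noncomputable def wpA {H : Type*} [NormedAddCommGroup H] [InnerProductSpace ℂ H]
    {n : ℕ} (A : H →L[ℂ] H) (p : ℝ) (T : Fin n → H →L[ℂ] H) : ℝ :=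
  sSup ((fun x => (∑ i, ‖(inner ℂ (A (T i x)) x : ℂ)‖ ^ p) ^ (1/p)) '' {x : H | normA A x = 1})

theorem block_A_positive_iff {H : Type*} [NormedAddCommGroup H] [InnerProductSpace ℂ H]
    [CompleteSpace H] (A T S R Rs : H →L[ℂ] H)
    (hA : A.IsPositive) (hT : (A * T).IsPositive) (hS : (A * S).IsPositive)
    (hRs : A * Rs = ContinuousLinearMap.adjoint R * A)
    (hRsRange : Set.range Rs ⊆ closure (Set.range A)) :
    (∀ x y : H, 0 ≤ (inner ℂ (A (T x + Rs y)) x + inner ℂ (A (R x + S y)) y : ℂ)) ↔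
    (∀ x y : H, ‖(inner ℂ (A (R x)) y : ℂ)‖ ^ 2 ≤
      ((inner ℂ (A (T x)) x : ℂ)).re * ((inner ℂ (A (S y)) y : ℂ)).re) := by
  -- key identity
  have key : ∀ x y : H, (inner ℂ (A (Rs y)) x : ℂ) = starRingEnd ℂ (inner ℂ (A (R x)) y) := by
    intro x y
    have h1 : A (Rs y) = (ContinuousLinearMap.adjoint R) (A y) := by
      have := congrArg (fun f : H →L[ℂ] H => f y) hRs; simpa using this
    rw [h1, ContinuousLinearMap.adjoint_inner_left, ← inner_conj_symm (A (R x)) y,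
      ← hA.isSelfAdjoint.adjoint_eq, ContinuousLinearMap.adjoint_inner_left]
    simp [hA.isSelfAdjoint.adjoint_eq]
  -- realness of the diagonal terms
  have real_of_sa : ∀ (B : H →L[ℂ] H), B.IsPositive → ∀ x : H,
      (inner ℂ (B x) x : ℂ) = (((inner ℂ (B x) x : ℂ)).re : ℂ) := by
    intro B hB x
    have h1 : (starRingEnd ℂ) (inner ℂ (B x) x : ℂ) = (inner ℂ (B x) x : ℂ) := by
      rw [inner_conj_symm, ← hB.isSelfAdjoint.adjoint_eq, ContinuousLinearMap.adjoint_inner_left,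
        hB.isSelfAdjoint.adjoint_eq]
    exact (Complex.conj_eq_iff_re.mp h1).symm
  have hTre : ∀ x : H, (inner ℂ (A (T x)) x : ℂ) = (((inner ℂ (A (T x)) x : ℂ)).re : ℂ) := by
    intro x; simpa using real_of_sa (A * T) hT x
  have hSre : ∀ y : H, (inner ℂ (A (S y)) y : ℂ) = (((inner ℂ (A (S y)) y : ℂ)).re : ℂ) := by
    intro y; simpa using real_of_sa (A * S) hS y
  have hTnn : ∀ x : H, 0 ≤ ((inner ℂ (A (T x)) x : ℂ)).re := by
    intro x
    have := hT.inner_nonneg_left x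
    simpa using (Complex.nonneg_iff.mp this).1
  have hSnn : ∀ y : H, 0 ≤ ((inner ℂ (A (S y)) y : ℂ)).re := by
    intro y
    have := hS.inner_nonneg_left y
    simpa using (Complex.nonneg_iff.mp this).1
  -- expansion of the quadratic form
  have expand : ∀ x y : H, (inner ℂ (A (T x + Rs y)) x + inner ℂ (A (R x + S y)) y : ℂ) =
      ((((inner ℂ (A (T x)) x : ℂ)).re + 2 * ((inner ℂ (A (R x)) y : ℂ)).re
        + ((inner ℂ (A (S y)) y : ℂ)).re : ℝ) : ℂ) := by
    intro x y
    rw [map_add, map_add, inner_add_left, inner_add_left, key x y]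
    rw [hTre x, hSre y]
    set z : ℂ := inner ℂ (A (R x)) y with hz
    have h2 : (starRingEnd ℂ) z + z = 2 * (z.re : ℂ) := by
      rw [add_comm, Complex.add_conj]; push_cast; ring
    push_cast [Complex.ofReal_re]
    linear_combination h2
  constructor
  · intro h x y
    set t := ((inner ℂ (A (T x)) x : ℂ)).re with ht
    set s := ((inner ℂ (A (S y)) y : ℂ)).re with hs
    set z : ℂ := (inner ℂ (A (R x)) y : ℂ) with hz
    by_cases hz0 : z = 0
    · rw [hz0]; simpa using mul_nonneg (hTnn x) (hSnn y)
    · have hzn : (0:ℝ) < ‖z‖ := norm_pos_iff.mpr hz0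
      have hzsq : z.re * z.re + z.im * z.im = ‖z‖ * ‖z‖ := by
        rw [← Complex.normSq_apply, Complex.normSq_eq_norm_sq]; ring
      have quad : ∀ lam : ℝ, 0 ≤ s * (lam * lam) + (-(2*‖z‖)) * lam + t := by
        intro lam
        have hh := h x ((((-lam/‖z‖ : ℝ) : ℂ) * (starRingEnd ℂ) z) • y)
        rw [expand, Complex.zero_le_real] at hh
        rw [inner_smul_right, map_smul, map_smul, inner_smul_left, inner_smul_right] at hh
        rw [← hz, ← ht] at hh
        rw [hSre y, ← hs] at hh
        simp only [Complex.mul_re, Complex.mul_im, Complex.conj_re, Complex.conj_im,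
          Complex.ofReal_re, Complex.ofReal_im, map_mul, Complex.conj_conj,
          Complex.conj_ofReal] at hh
        have hne : ‖z‖ ≠ 0 := by
          exact ne_of_gt hzn
        field_simp at hh
        have hh4 : 0 ≤ (s * (lam * lam) + (-(2 * ‖z‖)) * lam + t) * (‖z‖ * ‖z‖) := by
          linear_combination hh + (lam * lam * s - 2 * lam * ‖z‖) * hzsq
        nlinarith [hh4, mul_pos hzn hzn]
      have hd := discrim_le_zero quad
      rw [discrim] at hd
      nlinarith [hd, hzn]
  · intro h x y
    rw [expand, Complex.zero_le_real]
    set t := ((inner ℂ (A (T x)) x : ℂ)).re with ht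
    set s := ((inner ℂ (A (S y)) y : ℂ)).re with hs
    set z : ℂ := (inner ℂ (A (R x)) y : ℂ) with hz
    have hts := h x y
    rw [← hz, ← ht, ← hs] at hts
    have h1 : |z.re| ≤ ‖z‖ := by
      exact Complex.abs_re_le_norm z
    have h2 := Real.sq_sqrt (hTnn x)
    have h3 := Real.sq_sqrt (hSnn y)
    rw [← ht] at h2
    rw [← hs] at h3
    have h4 := Real.sqrt_nonneg t
    have h5 := Real.sqrt_nonneg s
    have key2 : ‖z‖ ≤ Real.sqrt t * Real.sqrt s := by
      have h6 : ‖z‖ ^ 2 ≤ (Real.sqrt t * Real.sqrt s) ^ 2 := by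
        rw [mul_pow, h2, h3]; exact hts
      calc ‖z‖ = Real.sqrt (‖z‖ ^ 2) := (Real.sqrt_sq (norm_nonneg z)).symm
        _ ≤ Real.sqrt ((Real.sqrt t * Real.sqrt s) ^ 2) := Real.sqrt_le_sqrt h6
        _ = Real.sqrt t * Real.sqrt s := Real.sqrt_sq (mul_nonneg h4 h5)
    nlinarith [key2, h1, neg_abs_le z.re, sq_nonneg (Real.sqrt t - Real.sqrt s), h2, h3]
end

section
/- Let A be a positive bounded operator on H, and let T ∈ B_A(H) commute with A (AT = TA). Then |T^{♯_A}|_A² T = T |T|_A², and consequently T |T|_A = |T^{♯_A}|_A T, where |T|_A = (A T^{♯_A} T)^{1/2} and |T^{♯_A}|_A = (A (T^{♯_A})^{♯_A} T^{♯_A})^{1/2}. -/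
open scoped ComplexOrder

-- commute with complex cfc
lemma my_commute_cfc {A : Type*} [CStarAlgebra A] {a b : A}
    (ha : IsSelfAdjoint a) (hcomm : Commute b a) (f : ℂ → ℂ) :
    Commute b (cfc f a) := by
  have ha' : IsStarNormal a := ha.isStarNormal
  have hmem : cfc f a ∈ StarAlgebra.elemental ℂ a := by
    by_cases hf : ContinuousOn f (spectrum ℂ a)
    · rw [cfc_apply f a ha' hf, cfcHom_eq_of_isStarNormal]
      exact SetLike.coe_mem _
    · rw [cfc_apply_of_not_continuousOn a hf]; exact zero_mem _
  refine StarAlgebra.elemental.induction_on (R := ℂ) (P := fun u _ => Commute b u) hmem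
    hcomm ?_ (fun r => (Algebra.commutes r b).symm)
    (fun u _ v _ pu pv => Commute.add_right pu pv)
    (fun u _ v _ pu pv => Commute.mul_right pu pv) ?_
  · show Commute b (star a); rwa [ha.star_eq]
  · intro s hs hps v hv
    have hcl : IsClosed {x : A | Commute b x} :=
      isClosed_eq (continuous_mul_left b) (continuous_mul_right b)
    exact hcl.closure_subset_iff.mpr (fun u hu => hps u hu) hv

lemma my_commute_sqrt {K : Type*} [NormedAddCommGroup K] [InnerProductSpace ℂ K]
    [CompleteSpace K] {a b : K →L[ℂ] K} (ha : 0 ≤ a) (hcomm : Commute b a) :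
    Commute b (CFC.sqrt a) := by
  rw [CFC.sqrt_eq_cfc, cfc_nnreal_eq_real NNReal.sqrt a ha,
    cfc_real_eq_complex _ (IsSelfAdjoint.of_nonneg ha)]
  exact my_commute_cfc (IsSelfAdjoint.of_nonneg ha) hcomm _

lemma my_conj_mul {K E : Type*} [NormedAddCommGroup K] [NormedSpace ℂ K]
    [NormedAddCommGroup E] [NormedSpace ℂ E] (e : K ≃L[ℂ] E) (M N : E →L[ℂ] E) :
    (((e.symm : E →L[ℂ] K) ∘L M ∘L (e : K →L[ℂ] E)) *
      ((e.symm : E →L[ℂ] K) ∘L N ∘L (e : K →L[ℂ] E))) =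
      (e.symm : E →L[ℂ] K) ∘L (M ∘L N) ∘L (e : K →L[ℂ] E) := by
  ext z
  simp [ContinuousLinearMap.mul_apply]

set_option maxHeartbeats 1000000 in
set_option synthInstance.maxHeartbeats 400000 in
lemma my_intertwine {H : Type*} [NormedAddCommGroup H] [InnerProductSpace ℂ H]
    [CompleteSpace H] (P Q X : H →L[ℂ] H) (hP : P.IsPositive) (hQ : Q.IsPositive)
    (h : P ^ 2 * X = X * Q ^ 2) : P * X = X * Q := by
  classical
  set K := WithLp 2 (H × H) with hK
  set e : K ≃L[ℂ] H × H := WithLp.prodContinuousLinearEquiv 2 ℂ H H with he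
  set G : (H × H) →L[ℂ] (H × H) := P.prodMap Q with hG
  set F : (H × H) →L[ℂ] (H × H) :=
    (X ∘L ContinuousLinearMap.snd ℂ H H).prod 0 with hF
  set D : K →L[ℂ] K := (e.symm : (H × H) →L[ℂ] K) ∘L G ∘L (e : K →L[ℂ] H × H) with hD
  set S : K →L[ℂ] K := (e.symm : (H × H) →L[ℂ] K) ∘L F ∘L (e : K →L[ℂ] H × H) with hS
  have happ : ∀ (M : (H × H) →L[ℂ] (H × H)) (z : K),
      e ((((e.symm : (H × H) →L[ℂ] K) ∘L M ∘L (e : K →L[ℂ] H × H))) z) = M (e z) := by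
    intro M z; simp
  -- pointwise consequence of h
  have hpt : ∀ y : H, P (P (X y)) = X (Q (Q y)) := by
    intro y
    have := congrArg (fun (M : H →L[ℂ] H) => M y) h
    simpa [sq, ContinuousLinearMap.mul_apply] using this
  -- middle commutation
  have hmid : F ∘L (G ∘L G) = (G ∘L G) ∘L F := by
    refine ContinuousLinearMap.ext fun z => ?_
    show (F (G (G z))) = (G (G (F z)))
    refine Prod.ext ?_ ?_
    · simp [hF, hG, hpt z.2]
    · simp [hF, hG]
  -- D is positive
  have hDsym : (D : K →ₗ[ℂ] K).IsSymmetric := by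
    intro x y
    have hPs := (ContinuousLinearMap.isSelfAdjoint_iff_isSymmetric.mp hP.isSelfAdjoint)
    have hQs := (ContinuousLinearMap.isSelfAdjoint_iff_isSymmetric.mp hQ.isSelfAdjoint)
    show (inner ℂ (D x) y : ℂ) = inner ℂ x (D y)
    have h1 : ∀ z : K, D z = WithLp.toLp 2 ((P z.ofLp.1, Q z.ofLp.2) : H × H) := by
      intro z; rfl
    show (inner ℂ (P x.ofLp.1) y.ofLp.1 + inner ℂ (Q x.ofLp.2) y.ofLp.2 : ℂ)
      = inner ℂ x.ofLp.1 (P y.ofLp.1) + inner ℂ x.ofLp.2 (Q y.ofLp.2)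
    exact congrArg₂ (· + ·) (hPs x.ofLp.1 y.ofLp.1) (hQs x.ofLp.2 y.ofLp.2)
  have hDpos : D.IsPositive := by
    refine ⟨hDsym, ?_⟩
    intro x
    have h1 : D x = WithLp.toLp 2 ((P x.ofLp.1, Q x.ofLp.2) : H × H) := rfl
    have : D.reApplyInnerSelf x = (inner ℂ (P x.ofLp.1) x.ofLp.1 : ℂ).re + (inner ℂ (Q x.ofLp.2) x.ofLp.2 : ℂ).re := by
      rw [ContinuousLinearMap.reApplyInnerSelf_apply, h1]
      change (inner ℂ (P x.ofLp.1) x.ofLp.1 + inner ℂ (Q x.ofLp.2) x.ofLp.2 : ℂ).re = _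
      simp
    rw [this]
    exact add_nonneg (hP.re_inner_nonneg_left x.ofLp.1) (hQ.re_inner_nonneg_left x.ofLp.2)
  have hDle : (0 : K →L[ℂ] K) ≤ D := (ContinuousLinearMap.nonneg_iff_isPositive D).mpr hDpos
  -- Commute S (D ^ 2)
  have hSD2 : Commute S (D ^ 2) := by
    have hmul : S * (D * D) = (D * D) * S := by
      rw [hD, hS, my_conj_mul e G G, my_conj_mul e F (G.comp G),
        my_conj_mul e (G.comp G) F, hmid]
    rw [sq]
    exact hmul
  have hD2le : (0 : K →L[ℂ] K) ≤ D ^ 2 := by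
    have h0 := star_mul_self_nonneg D
    rwa [hDpos.isSelfAdjoint.star_eq, ← sq] at h0
  have hSD : Commute S D := by
    have h1 := my_commute_sqrt hD2le hSD2
    rwa [CFC.sqrt_sq D hDle] at h1
  -- extract the conclusion
  ext y
  have := congrArg (fun (M : K →L[ℂ] K) =>
    (e (M ((e.symm : (H × H) →L[ℂ] K) ((0, y) : H × H)))).1) hSD.eq
  simp only [hS, hD, my_conj_mul, ContinuousLinearMap.mul_apply, happ] at this
  simpa [hF, hG, ContinuousLinearMap.mul_apply] using this.symm

theorem absA_commutation {H : Type*} [NormedAddCommGroup H] [InnerProductSpace ℂ H]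
    [CompleteSpace H] (A T Ts Tss absT absTs : H →L[ℂ] H)
    (hA : A.IsPositive) (hcomm : A * T = T * A)
    (hTs : A * Ts = ContinuousLinearMap.adjoint T * A)
    (hTsRange : Set.range Ts ⊆ closure (Set.range A))
    (hTss : A * Tss = ContinuousLinearMap.adjoint Ts * A)
    (hTssRange : Set.range Tss ⊆ closure (Set.range A))
    (habsT : absT.IsPositive) (habsT2 : absT * absT = A * Ts * T)
    (habsTs : absTs.IsPositive) (habsTs2 : absTs * absTs = A * Tss * Ts) :
    absTs ^ 2 * T = T * absT ^ 2 ∧ T * absT = absTs * T := by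
  have key : ContinuousLinearMap.adjoint Ts * A = A * T := by
    have h := congrArg star hTs
    rw [star_mul, star_mul, hA.isSelfAdjoint.star_eq, ContinuousLinearMap.star_eq_adjoint,
      ContinuousLinearMap.star_eq_adjoint, ContinuousLinearMap.adjoint_adjoint] at h
    exact h
  have h1 : absTs ^ 2 * T = T * absT ^ 2 := by
    have e1 : absTs ^ 2 = A * Tss * Ts := by rw [sq, habsTs2]
    have e2 : absT ^ 2 = A * Ts * T := by rw [sq, habsT2]
    rw [e1, e2]
    calc A * Tss * Ts * T = ContinuousLinearMap.adjoint Ts * A * Ts * T := by rw [hTss]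
    _ = ContinuousLinearMap.adjoint Ts * A * (Ts * T) := by rw [mul_assoc]
    _ = A * T * (Ts * T) := by rw [key]
    _ = T * A * (Ts * T) := by rw [hcomm]
    _ = T * (A * Ts * T) := by simp only [mul_assoc]
  exact ⟨h1, (my_intertwine absTs absT T habsTs habsT h1).symm⟩
end
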